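/- Assume the matrix PA satisfies (PA)ᵀ = PA, or PA = τ I + S for some τ ∈ ℝ and some matrix S with Sᵀ = −S. Fix a depth m ∈ ℤ^+ and x_0 ∈ ℝ^n, and let (x_k) be the NGMRESr(m) sequence: for each k, x_{k+1} = q(x_k) + Σ_{i=0}^{m_k} β_i^{(k)} (q(x_k) − x_{k−i}) with m_k = min{k, m}, where β^{(k)} ∈ ℝ^{m_k+1} minimizes ‖P(A x_{k+1} − b)‖ over all coefficient vectors. Let (x_k^{Gl}) be a left-preconditioned GMRES sequence with x_0^{Gl} = x_0: for each k, x_k^{Gl} ∈ x_0 + K_k(PA, r_0) and ‖P(A x_k^{Gl} − b)‖ ≤ ‖P(A y − b)‖ for every y ∈ x_0 + K_k(PA, r_0), where r_0 = P(A x_0 − b); write r_k^{Gl} = P(A x_k^{Gl} − b). Assume for some k* ∈ ℤ^+ that r_{k*−1}^{Gl} ≠ 0 and ‖r_k^{Gl}‖ < ‖r_{k−1}^{Gl}‖ for all integers k with 0 < k < k*. Then x_k = x_k^{Gl} for all 0 ≤ k ≤ k*. -/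

import Mathlib

open scoped RealInnerProductSpace

/-- Matrix-vector multiplication on Euclidean space. -/
noncomputable def mulV {n : ℕ} (M : Matrix (Fin n) (Fin n) ℝ)
    (v : EuclideanSpace ℝ (Fin n)) : EuclideanSpace ℝ (Fin n) :=
  Matrix.toEuclideanLin M v

/-- Krylov subspace `K_k(M, v) = span {v, M v, …, M^(k-1) v}`. -/
noncomputable def Krylov {n : ℕ} (M : Matrix (Fin n) (Fin n) ℝ)
    (v : EuclideanSpace ℝ (Fin n)) (k : ℕ) : Submodule ℝ (EuclideanSpace ℝ (Fin n)) :=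
  Submodule.span ℝ (Set.range fun i : Fin k => mulV (M ^ (i : ℕ)) v)

set_option linter.unusedSectionVars false
set_option maxHeartbeats 1000000

section mulVlemmas
open Matrix
variable {n : ℕ}

lemma mulV_mulV (M N : Matrix (Fin n) (Fin n) ℝ) (v : EuclideanSpace ℝ (Fin n)) :
    mulV M (mulV N v) = mulV (M * N) v := by
  simp [mulV, Matrix.toEuclideanLin_apply, Matrix.mulVec_mulVec]

lemma mulV_one (v : EuclideanSpace ℝ (Fin n)) : mulV 1 v = v := by
  simp [mulV, Matrix.toEuclideanLin_apply]

lemma mulV_pow (M : Matrix (Fin n) (Fin n) ℝ) (i : ℕ) (v : EuclideanSpace ℝ (Fin n)) :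
    mulV (M ^ i) v = ((Matrix.toEuclideanLin M) ^ i) v := by
  induction i generalizing v with
  | zero => simp [mulV, Matrix.toEuclideanLin_apply]
  | succ i ih =>
    rw [pow_succ, ← mulV_mulV, ih, pow_succ, Module.End.mul_apply]
    rfl

lemma mulV_transpose_inner (M : Matrix (Fin n) (Fin n) ℝ) (u v : EuclideanSpace ℝ (Fin n)) :
    ⟪mulV M u, v⟫ = ⟪u, mulV Mᵀ v⟫ := by
  have h : Mᵀ = Mᴴ := by ext i j; simp [Matrix.conjTranspose_apply]
  rw [mulV, mulV, h, Matrix.toEuclideanLin_conjTranspose_eq_adjoint,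
    LinearMap.adjoint_inner_right]

lemma mulV_sub (M : Matrix (Fin n) (Fin n) ℝ) (u v : EuclideanSpace ℝ (Fin n)) :
    mulV M (u - v) = mulV M u - mulV M v := by
  simp [mulV]

lemma mulV_msub (M N : Matrix (Fin n) (Fin n) ℝ) (v : EuclideanSpace ℝ (Fin n)) :
    mulV (M - N) v = mulV M v - mulV N v := by
  simp [mulV, _root_.map_sub]

lemma mulV_msmul (a : ℝ) (M : Matrix (Fin n) (Fin n) ℝ) (v : EuclideanSpace ℝ (Fin n)) :
    mulV (a • M) v = a • mulV M v := by
  simp [mulV, _root_.map_smul]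

end mulVlemmas

section general
variable {E : Type*} [NormedAddCommGroup E] [InnerProductSpace ℝ E] [FiniteDimensional ℝ E]

noncomputable def kry (T : E →ₗ[ℝ] E) (u : E) (k : ℕ) : Submodule ℝ E :=
  Submodule.span ℝ (Set.range fun i : Fin k => (T ^ (i : ℕ)) u)

variable (T : E →ₗ[ℝ] E) (u : E)

lemma pow_mem_kry {i k : ℕ} (h : i < k) : (T ^ i) u ∈ kry T u k :=
  Submodule.subset_span ⟨⟨i, h⟩, rfl⟩

lemma kry_le_of_le {k l : ℕ} (h : k ≤ l) : kry T u k ≤ kry T u l := by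
  refine Submodule.span_le.2 ?_
  rintro _ ⟨i, rfl⟩
  exact pow_mem_kry T u (lt_of_lt_of_le i.2 h)

lemma kry_zero : kry T u 0 = ⊥ := by
  simp [kry, Submodule.span_eq_bot]

lemma kry_succ (k : ℕ) :
    kry T u (k + 1) = kry T u k ⊔ Submodule.span ℝ {(T ^ k) u} := by
  apply le_antisymm
  · refine Submodule.span_le.2 ?_
    rintro _ ⟨i, rfl⟩
    rcases lt_or_eq_of_le (Nat.lt_succ_iff.1 i.2) with h | h
    · exact Submodule.mem_sup_left (pow_mem_kry T u h)
    · show (T ^ (i : ℕ)) u ∈ _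
      rw [h]
      exact Submodule.mem_sup_right (Submodule.mem_span_singleton_self _)
  · refine sup_le (kry_le_of_le T u (Nat.le_succ k)) ?_
    rw [Submodule.span_singleton_le_iff_mem _ _]
    exact pow_mem_kry T u (Nat.lt_succ_self k)

lemma map_kry_le (k : ℕ) : Submodule.map T (kry T u k) ≤ kry T u (k + 1) := by
  rw [kry, Submodule.map_span]
  refine Submodule.span_le.2 ?_
  rintro _ ⟨_, ⟨i, rfl⟩, rfl⟩
  have : T ((T ^ (i : ℕ)) u) = (T ^ ((i : ℕ) + 1)) u := by
    rw [pow_succ', Module.End.mul_apply]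
  rw [this]
  exact pow_mem_kry T u (by omega)

lemma T_mem_kry {v : E} {k : ℕ} (hv : v ∈ kry T u k) : T v ∈ kry T u (k + 1) :=
  map_kry_le T u k ⟨v, hv, rfl⟩

lemma u_mem_kry {k : ℕ} (h : 0 < k) : u ∈ kry T u k := by
  have := pow_mem_kry T u h
  simpa using this

lemma inner_eq_zero_of_min (y v : E) (h : ∀ t : ℝ, ‖y‖ ≤ ‖y + t • v‖) : ⟪y, v⟫ = 0 := by
  by_cases hv : v = 0
  · simp [hv]
  have hvn : (0:ℝ) < ‖v‖ := norm_pos_iff.2 hv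
  have hN : (0:ℝ) < ‖v‖ ^ 2 := by positivity
  set g : ℝ := ⟪y, v⟫ with hg
  have key : ∀ t : ℝ, 0 ≤ 2 * t * g + t ^ 2 * ‖v‖ ^ 2 := by
    intro t
    have h1 := h t
    have h2 : ‖y‖ ^ 2 ≤ ‖y + t • v‖ ^ 2 := by
      apply sq_le_sq' <;> nlinarith [norm_nonneg y, norm_nonneg (y + t • v)]
    have h3 : ‖y + t • v‖ ^ 2 = ‖y‖ ^ 2 + 2 * (t * g) + t ^ 2 * ‖v‖ ^ 2 := by
      rw [norm_add_sq_real, real_inner_smul_right, norm_smul, mul_pow,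
        Real.norm_eq_abs, sq_abs]
      try ring
    nlinarith
  have h4 := key (-(g / ‖v‖ ^ 2))
  have h5 : 2 * (-(g / ‖v‖ ^ 2)) * g + (-(g / ‖v‖ ^ 2)) ^ 2 * ‖v‖ ^ 2
      = -(g ^ 2 / ‖v‖ ^ 2) := by
    field_simp
    ring
  rw [h5] at h4
  have h7 : g ^ 2 ≤ 0 := by
    by_contra hc
    push_neg at hc
    have := div_pos hc hN
    linarith
  nlinarith [sq_nonneg g]

theorem gmres_general
    (hTinj : Function.Injective T)
    (al be : ℝ)
    (hsym : ∀ v w : E, ⟪T v, w⟫ = al * ⟪v, w⟫ + be * ⟪v, T w⟫)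
    (c : E) (m : ℕ) (hm : 0 < m)
    (x xG : ℕ → E) (β : ℕ → ℕ → ℝ)
    (hu : u = T (x 0) - c)
    (hstep : ∀ k, x (k+1) = (x k - (T (x k) - c)) +
        ∑ i ∈ Finset.range (min k m + 1), β k i • ((x k - (T (x k) - c)) - x (k - i)))
    (hopt : ∀ k, ∀ cf : ℕ → ℝ,
        ‖T (x (k+1)) - c‖ ≤
        ‖T ((x k - (T (x k) - c)) + ∑ i ∈ Finset.range (min k m + 1),
            cf i • ((x k - (T (x k) - c)) - x (k - i))) - c‖)
    (hG0 : xG 0 = x 0)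
    (hGmem : ∀ k, ∃ z ∈ kry T u k, xG k = x 0 + z)
    (hGopt : ∀ k, ∀ z ∈ kry T u k, ‖T (xG k) - c‖ ≤ ‖T (x 0 + z) - c‖)
    (kstar : ℕ) (hkstar : 0 < kstar)
    (hne : T (xG (kstar - 1)) - c ≠ 0)
    (hdec : ∀ k, 0 < k → k < kstar → ‖T (xG k) - c‖ < ‖T (xG (k-1)) - c‖) :
    ∀ k ≤ kstar, x k = xG k := by
  classical
  set K : ℕ → Submodule ℝ E := kry T u with hK
  set r : ℕ → E := fun k => T (xG k) - c with hr
  -- residual formula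
  have F1 : ∀ z : E, T (x 0 + z) - c = u + T z := by
    intro z
    rw [map_add, hu]
    abel
  choose zf hzmem hzeq using hGmem
  have hrz : ∀ k, r k = u + T (zf k) := by
    intro k
    rw [hr]
    simp only
    rw [hzeq k, F1]
  -- orthogonality of GMRES residuals
  have horth : ∀ k, ∀ v ∈ K k, ⟪r k, T v⟫ = 0 := by
    intro k v hv
    apply inner_eq_zero_of_min
    intro t
    have hmem : zf k + t • v ∈ K k := (K k).add_mem (hzmem k) ((K k).smul_mem t hv)
    have h1 := hGopt k _ hmem
    rw [F1, map_add, map_smul, ← add_assoc, ← hrz k] at h1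
    rw [hr] at h1
    simpa using h1
  -- uniqueness of the GMRES iterate
  have huniq : ∀ k, ∀ z ∈ K k, (∀ v ∈ K k, ⟪u + T z, T v⟫ = 0) → x 0 + z = xG k := by
    intro k z hz hoz
    have hw : z - zf k ∈ K k := (K k).sub_mem hz (hzmem k)
    have hTw : T (z - zf k) = (u + T z) - r k := by
      rw [hrz k, map_sub]
      abel
    have h1 : ⟪u + T z, T (z - zf k)⟫ = 0 := hoz _ hw
    have h2 : ⟪r k, T (z - zf k)⟫ = 0 := horth k _ hw
    have hz0 : ⟪T (z - zf k), T (z - zf k)⟫ = 0 := by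
      nth_rewrite 1 [hTw]
      rw [inner_sub_left, h1, h2]
      ring
    have : T (z - zf k) = 0 := by
      rwa [inner_self_eq_zero] at hz0
    have : z - zf k = 0 := hTinj (by rw [this, map_zero])
    have : z = zf k := by
      rwa [sub_eq_zero] at this
    rw [this, ← hzeq k]
  -- monotone residuals
  have hmono : ∀ k ≤ kstar - 1, ∀ j ≤ k, ‖r k‖ ≤ ‖r j‖ := by
    intro k
    induction k with
    | zero => intro _ j hj; interval_cases j; rfl
    | succ k ih =>
      intro hk j hj
      rcases Nat.lt_succ_iff_lt_or_eq.1 (Nat.lt_succ_of_le hj) with h | h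
      · have hlt : ‖r (k+1)‖ < ‖r k‖ := by
          have := hdec (k+1) (Nat.succ_pos k) (by omega)
          simpa using this
        exact le_trans hlt.le (ih (by omega) j (by omega))
      · rw [h]
  have hrne : ∀ j ≤ kstar - 1, r j ≠ 0 := by
    intro j hj h0
    have h1 := hmono (kstar - 1) le_rfl j hj
    rw [h0] at h1
    simp at h1
    exact hne h1
  have hzf0 : zf 0 = 0 := by
    have := hzmem 0
    rw [hK, kry_zero, Submodule.mem_bot] at this
    exact this
  have hr0u : r 0 = u := by rw [hrz 0, hzf0, map_zero, add_zero]
  have hune : u ≠ 0 := by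
    intro h0
    exact hrne 0 (Nat.zero_le _) (by rw [hr0u, h0])
  -- Krylov powers escape
  have hTpow : ∀ j ≤ kstar - 1, (T ^ j) u ∉ K j := by
    intro j hj hmem
    have hKeq : K (j+1) = K j := by
      rw [hK, kry_succ]
      rw [sup_eq_left]
      rw [Submodule.span_singleton_le_iff_mem]
      exact hmem
    have hmaple : Submodule.map T (K j) ≤ K j := by
      have h := map_kry_le T u j
      rw [← hK] at h
      rw [hKeq] at h
      exact h
    have hfr : Module.finrank ℝ (Submodule.map T (K j)) = Module.finrank ℝ (K j) :=
      (Submodule.equivMapOfInjective T hTinj (K j)).finrank_eq.symm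
    have hmapeq : Submodule.map T (K j) = K j :=
      Submodule.eq_of_le_of_finrank_le hmaple (le_of_eq hfr.symm)
    rcases Nat.eq_zero_or_pos j with h0 | hpos
    · subst h0
      rw [hK, kry_zero, Submodule.mem_bot, pow_zero] at hmem
      exact hune hmem
    · have humem : u ∈ Submodule.map T (K j) := by
        rw [hmapeq]
        exact u_mem_kry T u hpos
      obtain ⟨z, hz, hTz⟩ := humem
      have h1 := hGopt j (-z) ((K j).neg_mem hz)
      rw [F1, map_neg, hTz] at h1
      simp only [add_neg_cancel, norm_zero] at h1
      exact hrne j hj (norm_eq_zero.1 (le_antisymm h1 (norm_nonneg _)))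
  -- residual lies in next Krylov space
  have hrmem : ∀ k, r k ∈ K (k+1) := by
    intro k
    rw [hrz k, hK]
    exact (kry T u (k+1)).add_mem (u_mem_kry T u (Nat.succ_pos k)) (T_mem_kry T u (hzmem k))
  -- finishing lemma
  have hfin : ∀ k z, z ∈ K (k+1) → (∀ v ∈ K (k+1), ⟪u + T z, T v⟫ = 0) →
      ‖T (x (k+1)) - c‖ ≤ ‖u + T z‖ → x (k+1) - x 0 ∈ K (k+1) → x (k+1) = xG (k+1) := by
    intro k z hz horz hle hxm
    set w := x (k+1) - x 0 - z with hw
    have hwmem : w ∈ K (k+1) := (K (k+1)).sub_mem hxm hz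
    have hres : T (x (k+1)) - c = (u + T z) + T w := by
      have hx : x (k+1) = x 0 + (z + w) := by rw [hw]; abel
      rw [hx, F1, map_add]
      abel
    have hcross : ⟪u + T z, T w⟫ = 0 := horz _ hwmem
    have hpyth : ‖T (x (k+1)) - c‖^2 = ‖u + T z‖^2 + ‖T w‖^2 := by
      rw [hres, norm_add_sq_real, hcross]
      ring
    have h2 : ‖T (x (k+1)) - c‖^2 ≤ ‖u + T z‖^2 :=
      pow_le_pow_left₀ (norm_nonneg _) hle 2
    have hTw0 : T w = 0 := by
      have h3 : ‖T w‖^2 ≤ 0 := by linarith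
      have h4 : ‖T w‖ = 0 := by nlinarith [norm_nonneg (T w)]
      exact norm_eq_zero.1 h4
    have hw0 : w = 0 := hTinj (by rw [hTw0, map_zero])
    have hx : x (k+1) = x 0 + z := by
      have h := hw0
      rw [hw, sub_sub, sub_eq_zero] at h
      exact h
    rw [hx]
    exact huniq (k+1) z hz horz
  -- membership of the NGMRES iterate
  have hmemstep : ∀ k, (∀ j ≤ k, x j = xG j) → x (k+1) - x 0 ∈ K (k+1) := by
    intro k IH
    have hq : x k - (T (x k) - c) = (x 0 + zf k) - r k := by
      rw [IH k le_rfl, hzeq k, F1, ← hrz k]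
    have hterm : ∀ i ∈ Finset.range (min k m + 1),
        β k i • (((x 0 + zf k) - r k) - x (k - i)) = β k i • ((zf k - zf (k-i)) - r k) := by
      intro i hi
      rw [IH (k-i) (Nat.sub_le k i), hzeq (k-i)]
      congr 1
      abel
    have e : x (k+1) - x 0 = (zf k - r k) +
        ∑ i ∈ Finset.range (min k m + 1), β k i • ((zf k - zf (k-i)) - r k) := by
      rw [hstep k, hq, Finset.sum_congr rfl hterm]
      abel
    rw [e]
    refine (K (k+1)).add_mem ((K (k+1)).sub_mem ?_ (hrmem k)) (Submodule.sum_mem _ ?_)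
    · exact kry_le_of_le T u (Nat.le_succ k) (hzmem k)
    · intro i hi
      refine (K (k+1)).smul_mem _ ((K (k+1)).sub_mem ((K (k+1)).sub_mem ?_ ?_) (hrmem k))
      · exact kry_le_of_le T u (Nat.le_succ k) (hzmem k)
      · exact kry_le_of_le T u (by omega : k - i ≤ k+1) (hzmem (k-i))
  -- step 0
  have hstep0 : x 1 = xG 1 := by
    have hTune : T u ≠ 0 := fun h => hune (hTinj (by rw [h, map_zero]))
    have hTupos : (0:ℝ) < ‖T u‖ := norm_pos_iff.2 hTune
    have hNpos : (0:ℝ) < ‖T u‖^2 := by positivity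
    set s : ℝ := -(⟪u, T u⟫ / ‖T u‖^2) with hs
    set z : E := s • u with hzdef
    have humem1 : u ∈ K 1 := by rw [hK]; exact u_mem_kry T u one_pos
    have hzmem1 : z ∈ K 1 := (K 1).smul_mem s humem1
    have hK1 : K 1 = Submodule.span ℝ {u} := by
      rw [hK, kry_succ, kry_zero, bot_sup_eq, pow_zero, Module.End.one_apply]
    have horz : ∀ v ∈ K 1, ⟪u + T z, T v⟫ = 0 := by
      intro v hv
      rw [hK1, Submodule.mem_span_singleton] at hv
      obtain ⟨a, rfl⟩ := hv
      have h1 : ⟪u + s • T u, T u⟫ = 0 := by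
        rw [inner_add_left, real_inner_smul_left, real_inner_self_eq_norm_sq, hs]
        field_simp
        ring
      rw [map_smul, map_smul, real_inner_smul_right, h1, mul_zero]
    have hcand := hopt 0 (fun _ => -1 - s)
    have he : (x 0 - (T (x 0) - c)) + ∑ i ∈ Finset.range (min 0 m + 1),
        (fun _ => -1 - s) i • ((x 0 - (T (x 0) - c)) - x (0 - i)) = x 0 + z := by
      simp only [Nat.zero_min, zero_add, Finset.sum_range_one, Nat.sub_zero]
      rw [← hu, hzdef]
      module
    rw [he, F1] at hcand
    have hIH0 : ∀ j ≤ 0, x j = xG j := by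
      intro j hj
      interval_cases j
      exact hG0.symm
    exact hfin 0 z hzmem1 horz hcand (hmemstep 0 hIH0)
  -- general step
  have hstepk : ∀ k, 0 < k → k + 1 ≤ kstar → (∀ j ≤ k, x j = xG j) → x (k+1) = xG (k+1) := by
    intro k hkpos hks IH
    have hk1 : k ≤ kstar - 1 := by omega
    have hrkne : r k ≠ 0 := hrne k hk1
    have hdeck : ‖r k‖ < ‖r (k-1)‖ := hdec k hkpos (by omega)
    have hTrne : T (r k) ≠ 0 := fun h => hrkne (hTinj (by rw [h, map_zero]))
    have hle1 : K (k-1) ≤ K k := kry_le_of_le T u (by omega)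
    have hle2 : K k ≤ K (k+1) := kry_le_of_le T u (by omega)
    have hr'mem : r (k-1) ∈ K k := by
      have h := hrmem (k-1)
      rwa [(by omega : k - 1 + 1 = k)] at h
    have hzknot : zf k ∉ K (k-1) := by
      intro hmem
      have horz : ∀ v ∈ K (k-1), ⟪u + T (zf k), T v⟫ = 0 := by
        intro v hv
        rw [← hrz k]
        exact horth k v (hle1 hv)
      have heq := huniq (k-1) (zf k) hmem horz
      rw [← hzeq k] at heq
      have hre : r k = r (k-1) := by
        show T (xG k) - c = T (xG (k-1)) - c
        rw [heq]
      rw [hre] at hdeck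
      exact lt_irrefl _ hdeck
    set d : E := zf k - zf (k-1) with hd
    have hdmem : d ∈ K k := (K k).sub_mem (hzmem k) (hle1 (hzmem (k-1)))
    have hdnot : d ∉ K (k-1) := by
      intro hmem
      apply hzknot
      have : zf k = d + zf (k-1) := by rw [hd]; abel
      rw [this]
      exact (K (k-1)).add_mem hmem (hzmem (k-1))
    have hTd : T d = r k - r (k-1) := by
      rw [hd, map_sub, hrz k, hrz (k-1)]
      abel
    have hTdne : T d ≠ 0 := by
      intro h
      rw [hTd, sub_eq_zero] at h
      rw [h] at hdeck
      exact lt_irrefl _ hdeck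
    have hksucc : K k = K (k-1) ⊔ Submodule.span ℝ {(T ^ (k-1)) u} := by
      have h := kry_succ T u (k-1)
      rw [← hK] at h
      rwa [(by omega : k - 1 + 1 = k)] at h
    have hTpowk : T ((T ^ (k-1)) u) = (T ^ k) u := by
      have h1 : T ((T ^ (k-1)) u) = (T ^ (k-1+1)) u := by
        rw [pow_succ', Module.End.mul_apply]
      rw [h1, (by omega : k - 1 + 1 = k)]
    -- decomposition of zf k
    have hzk2 : zf k ∈ K (k-1) ⊔ Submodule.span ℝ {(T ^ (k-1)) u} := by
      rw [← hksucc]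
      exact hzmem k
    obtain ⟨w1, hw1, w2, hw2, hzfk⟩ := Submodule.mem_sup.1 hzk2
    obtain ⟨a, rfl⟩ := Submodule.mem_span_singleton.1 hw2
    have hane : a ≠ 0 := by
      intro h0
      apply hzknot
      rw [← hzfk, h0, zero_smul, add_zero]
      exact hw1
    have hTw1mem : T w1 ∈ K k := by
      have h := T_mem_kry T u (hw1 : w1 ∈ kry T u (k-1))
      rwa [(by omega : k - 1 + 1 = k)] at h
    have humem : u ∈ K k := by
      rw [hK]
      exact u_mem_kry T u hkpos
    have hTzf : T (zf k) = T w1 + a • (T ^ k) u := by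
      rw [← hzfk, map_add, map_smul, hTpowk]
    have hcomb : a • (T ^ k) u = r k - u - T w1 := by
      rw [hrz k, hTzf]
      abel
    have hrknot : r k ∉ K k := by
      intro hmem
      apply hTpow k hk1
      have hmem2 : a • (T ^ k) u ∈ K k := by
        rw [hcomb]
        exact (K k).sub_mem ((K k).sub_mem hmem humem) hTw1mem
      have h := (K k).smul_mem a⁻¹ hmem2
      rwa [smul_smul, inv_mul_cancel₀ hane, one_smul] at h
    -- decomposition of d
    have hd2 : d ∈ K (k-1) ⊔ Submodule.span ℝ {(T ^ (k-1)) u} := by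
      rw [← hksucc]
      exact hdmem
    obtain ⟨w1', hw1', w2', hw2', hdk⟩ := Submodule.mem_sup.1 hd2
    obtain ⟨a', rfl⟩ := Submodule.mem_span_singleton.1 hw2'
    have ha'ne : a' ≠ 0 := by
      intro h0
      apply hdnot
      rw [← hdk, h0, zero_smul, add_zero]
      exact hw1'
    have hKk : K k = K (k-1) ⊔ Submodule.span ℝ {d} := by
      apply le_antisymm
      · rw [hksucc]
        apply sup_le le_sup_left
        rw [Submodule.span_singleton_le_iff_mem _ _]
        have ha1 : a' • (T ^ (k-1)) u = d - w1' := by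
          rw [← hdk]
          abel
        have hg : (T ^ (k-1)) u = a'⁻¹ • (d - w1') := by
          rw [← ha1, smul_smul, inv_mul_cancel₀ ha'ne, one_smul]
        rw [hg]
        refine Submodule.smul_mem _ _ (Submodule.sub_mem _ ?_ ?_)
        · exact Submodule.mem_sup_right (Submodule.mem_span_singleton_self _)
        · exact Submodule.mem_sup_left hw1'
      · exact sup_le hle1 ((Submodule.span_singleton_le_iff_mem _ _).2 hdmem)
    have hKk1 : K (k+1) = K k ⊔ Submodule.span ℝ {r k} := by
      apply le_antisymm
      · have h := kry_succ T u k
        rw [← hK] at h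
        rw [h]
        apply sup_le le_sup_left
        rw [Submodule.span_singleton_le_iff_mem _ _]
        have hg : (T ^ k) u = a⁻¹ • (r k - u - T w1) := by
          rw [← hcomb, smul_smul, inv_mul_cancel₀ hane, one_smul]
        rw [hg]
        refine Submodule.smul_mem _ _ (Submodule.sub_mem _ (Submodule.sub_mem _ ?_ ?_) ?_)
        · exact Submodule.mem_sup_right (Submodule.mem_span_singleton_self _)
        · exact Submodule.mem_sup_left humem
        · exact Submodule.mem_sup_left hTw1mem
      · exact sup_le hle2 ((Submodule.span_singleton_le_iff_mem _ _).2 (hrmem k))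
    -- scalar quantities
    have hTdpos : (0:ℝ) < ‖T d‖ := norm_pos_iff.2 hTdne
    have hTrpos : (0:ℝ) < ‖T (r k)‖ := norm_pos_iff.2 hTrne
    set γ : ℝ := ⟪r k, T (r k)⟫ with hγ
    set N : ℝ := ‖T (r k)‖^2 with hN
    set D : ℝ := ‖T d‖^2 with hDdef
    have hNpos : (0:ℝ) < N := by rw [hN]; positivity
    have hDpos : (0:ℝ) < D := by rw [hDdef]; positivity
    have hrTd : ⟪r k, T d⟫ = 0 := horth k d hdmem
    have hrTr' : ⟪r k, T (r (k-1))⟫ = 0 := horth k _ hr'mem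
    have hTTd : T (T d) = T (r k) - T (r (k-1)) := by rw [hTd, map_sub]
    have hTrTd : ⟪T (r k), T d⟫ = be * γ := by
      rw [hsym (r k) (T d), hrTd, hTTd, inner_sub_right, hrTr', hγ]
      ring
    set Δ : ℝ := N * D - (be*γ)^2 with hΔ
    have hcs : (be*γ)^2 ≤ N * D := by
      have h := real_inner_mul_inner_self_le (T (r k)) (T d)
      rw [hTrTd, real_inner_self_eq_norm_sq, real_inner_self_eq_norm_sq] at h
      rw [hN, hDdef]
      nlinarith
    have hΔpos : 0 < Δ := by
      rcases lt_or_eq_of_le hcs with h | h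
      · rw [hΔ]
        linarith
      · exfalso
        have hDinner : ⟪T d, T d⟫ = D := by
          rw [real_inner_self_eq_norm_sq, hDdef]
        have hNinner : ⟪T (r k), T (r k)⟫ = N := by
          rw [real_inner_self_eq_norm_sq, hN]
        have hv : ‖D • T (r k) - (be*γ) • T d‖^2 = D * (N * D - (be*γ)^2) := by
          rw [norm_sub_sq_real, real_inner_smul_left, real_inner_smul_right, hTrTd,
            norm_smul, norm_smul, Real.norm_eq_abs, Real.norm_eq_abs, mul_pow, mul_pow,
            sq_abs, sq_abs, ← hN, ← hDdef]
          ring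
        rw [← h, sub_self, mul_zero] at hv
        have hv0 : D • T (r k) - (be*γ) • T d = 0 := by
          have h4 : ‖D • T (r k) - (be*γ) • T d‖ = 0 := by
            nlinarith [norm_nonneg (D • T (r k) - (be*γ) • T d)]
          exact norm_eq_zero.1 h4
        have hlin : T (D • r k - (be*γ) • d) = 0 := by
          rw [map_sub, map_smul, map_smul]
          exact hv0
        have h2 : D • r k - (be*γ) • d = 0 := hTinj (by rw [hlin, map_zero])
        have h3 : r k = D⁻¹ • ((be*γ) • d) := by
          have h5 : D • r k = (be*γ) • d := by
            rw [← sub_eq_zero]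
            exact h2
          rw [← h5, smul_smul, inv_mul_cancel₀ (ne_of_gt hDpos), one_smul]
        apply hrknot
        rw [h3]
        exact (K k).smul_mem _ ((K k).smul_mem _ hdmem)
    set sc : ℝ := -(γ*D)/Δ with hsc
    set tc : ℝ := be*γ^2/Δ with htc
    set z : E := zf k + sc • r k + tc • d with hzdef
    have hTz : u + T z = r k + sc • T (r k) + tc • T d := by
      rw [hzdef, map_add, map_add, map_smul, map_smul]
      have h := (hrz k).symm
      rw [← add_assoc, ← add_assoc, h]
    have hzmemk1 : z ∈ K (k+1) := by
      rw [hzdef]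
      exact (K (k+1)).add_mem ((K (k+1)).add_mem (hle2 (hzmem k))
        ((K (k+1)).smul_mem _ (hrmem k))) ((K (k+1)).smul_mem _ (hle2 hdmem))
    have hDinner : ⟪T d, T d⟫ = D := by rw [real_inner_self_eq_norm_sq, hDdef]
    have hNinner : ⟪T (r k), T (r k)⟫ = N := by rw [real_inner_self_eq_norm_sq, hN]
    have hΔne : Δ ≠ 0 := ne_of_gt hΔpos
    have hb2 : ⟪u + T z, T d⟫ = 0 := by
      rw [hTz, inner_add_left, inner_add_left, real_inner_smul_left, real_inner_smul_left,
        hrTd, hTrTd, hDinner, hsc, htc]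
      field_simp
      ring
    have hb3 : ⟪u + T z, T (r k)⟫ = 0 := by
      have h1 : ⟪T d, T (r k)⟫ = be * γ := by
        rw [real_inner_comm]
        exact hTrTd
      rw [hTz, inner_add_left, inner_add_left, real_inner_smul_left, real_inner_smul_left,
        h1, hNinner, ← hγ, hsc, htc, hΔ]
      field_simp
      ring_nf
      have hX : -(γ ^ 2 * be ^ 2) + D * N ≠ 0 := by
        intro h; apply hΔne; rw [hΔ]; linear_combination h
      field_simp
      ring
    have hb1 : ∀ v ∈ K (k-1), ⟪u + T z, T v⟫ = 0 := by
      intro v hv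
      have hvk : v ∈ K k := hle1 hv
      have hTvk : T v ∈ K k := by
        have h := T_mem_kry T u (hv : v ∈ kry T u (k-1))
        rwa [(by omega : k - 1 + 1 = k)] at h
      have e1 : ⟪r k, T v⟫ = 0 := horth k v hvk
      have e2 : ⟪T (r k), T v⟫ = 0 := by
        rw [hsym (r k) (T v), e1, horth k (T v) hTvk]
        ring
      have e3 : ⟪T d, T v⟫ = 0 := by
        rw [hTd, inner_sub_left, e1, horth (k-1) v hv]
        ring
      rw [hTz, inner_add_left, inner_add_left, real_inner_smul_left, real_inner_smul_left,
        e1, e2, e3]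
      ring
    have horthv : ∀ v ∈ K (k+1), ⟪u + T z, T v⟫ = 0 := by
      intro v hv
      rw [hKk1, hKk] at hv
      obtain ⟨v1, hv1, v2, hv2, rfl⟩ := Submodule.mem_sup.1 hv
      obtain ⟨v11, hv11, v12, hv12, rfl⟩ := Submodule.mem_sup.1 hv1
      obtain ⟨a2, rfl⟩ := Submodule.mem_span_singleton.1 hv12
      obtain ⟨a3, rfl⟩ := Submodule.mem_span_singleton.1 hv2
      have expand : ∀ w : E, ⟪w, T (v11 + a2 • d + a3 • r k)⟫ =
          ⟪w, T v11⟫ + a2 * ⟪w, T d⟫ + a3 * ⟪w, T (r k)⟫ := by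
        intro w
        rw [map_add, map_add, map_smul, map_smul, inner_add_right, inner_add_right,
          real_inner_smul_right, real_inner_smul_right]
      rw [expand, hb1 v11 hv11, hb2, hb3]
      ring
    -- candidate coefficients
    set cf : ℕ → ℝ := fun i => if i = 0 then -1 - sc - tc else if i = 1 then tc else 0 with hcf
    have hzero : ∀ i, 2 ≤ i → cf i = 0 := by
      intro i hi
      rw [hcf]
      have h0 : i ≠ 0 := by omega
      have h1 : i ≠ 1 := by omega
      simp [h0, h1]
    have hcand := hopt k cf
    have hq : x k - (T (x k) - c) = (x 0 + zf k) - r k := by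
      rw [IH k le_rfl, hzeq k, F1, ← hrz k]
    have hminge : (2:ℕ) ≤ min k m + 1 := by
      have := lt_min hkpos hm
      omega
    have hs2 : ∑ i ∈ Finset.range (min k m + 1), cf i • (((x 0 + zf k) - r k) - x (k - i)) =
        cf 0 • (((x 0 + zf k) - r k) - x (k - 0)) + cf 1 • (((x 0 + zf k) - r k) - x (k - 1)) := by
      rw [Finset.range_eq_Ico,
        ← Finset.sum_Ico_consecutive _ (by omega : (0:ℕ) ≤ 2) hminge]
      have hzs : ∑ i ∈ Finset.Ico 2 (min k m + 1), cf i • (((x 0 + zf k) - r k) - x (k - i)) = 0 := by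
        apply Finset.sum_eq_zero
        intro i hi
        rw [hzero i (Finset.mem_Ico.1 hi).1, zero_smul]
      rw [hzs, add_zero]
      rw [show Finset.Ico 0 2 = Finset.range 2 from by rw [Finset.range_eq_Ico]]
      rw [Finset.sum_range_succ, Finset.sum_range_one]
    have hc0 : cf 0 = -1 - sc - tc := by rw [hcf]; norm_num
    have hc1 : cf 1 = tc := by
      rw [hcf]
      norm_num
    have he : (x k - (T (x k) - c)) + ∑ i ∈ Finset.range (min k m + 1),
        cf i • ((x k - (T (x k) - c)) - x (k - i)) = x 0 + z := by
      rw [hq, hs2, Nat.sub_zero, IH k le_rfl, hzeq k, IH (k-1) (by omega), hzeq (k-1),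
        hc0, hc1, hzdef, hd]
      module
    rw [he, F1] at hcand
    exact hfin k z hzmemk1 horthv hcand (hmemstep k IH)
  -- main induction
  intro k
  induction k using Nat.strong_induction_on with
  | _ k ihs =>
    intro hk
    cases k with
    | zero => exact hG0.symm
    | succ k =>
      have IH : ∀ j ≤ k, x j = xG j := fun j hj => ihs j (by omega) (by omega)
      rcases Nat.eq_zero_or_pos k with h0 | hpos
      · subst h0
        exact hstep0
      · exact hstepk k hpos hk IH

end general

open Matrix in
/-- windowed NGMRESr(m) equals left-preconditioned GMRES when PA is
symmetric or a real shift of a skew-symmetric matrix. -/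
theorem stmt_19 {n : ℕ} (A P : Matrix (Fin n) (Fin n) ℝ)
    (hA : IsUnit A.det) (hP : IsUnit P.det)
    (hsym : (P * A)ᵀ = P * A ∨
      ∃ (τ : ℝ) (S : Matrix (Fin n) (Fin n) ℝ), Sᵀ = -S ∧ P * A = τ • (1 : Matrix (Fin n) (Fin n) ℝ) + S)
    (b : EuclideanSpace ℝ (Fin n))
    (q : EuclideanSpace ℝ (Fin n) → EuclideanSpace ℝ (Fin n))
    (hq : ∀ y, q y = y + mulV P (b - mulV A y))
    (m : ℕ) (hm : 0 < m)
    (x xG : ℕ → EuclideanSpace ℝ (Fin n))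
    (r0 : EuclideanSpace ℝ (Fin n)) (hr0 : r0 = mulV P (mulV A (x 0) - b))
    -- NGMRESr(m) sequence
    (β : ℕ → ℕ → ℝ)
    (hstep : ∀ k, x (k + 1) =
      q (x k) + ∑ i ∈ Finset.range (min k m + 1), β k i • (q (x k) - x (k - i)))
    (hopt : ∀ k, ∀ c : ℕ → ℝ,
      ‖mulV P (mulV A (x (k + 1)) - b)‖ ≤
      ‖mulV P (mulV A (q (x k) +
          ∑ i ∈ Finset.range (min k m + 1), c i • (q (x k) - x (k - i))) - b)‖)
    -- left-preconditioned GMRES sequence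
    (hG0 : xG 0 = x 0)
    (hGmem : ∀ k, ∃ z ∈ Krylov (P * A) r0 k, xG k = x 0 + z)
    (hGopt : ∀ k, ∀ z ∈ Krylov (P * A) r0 k,
      ‖mulV P (mulV A (xG k) - b)‖ ≤ ‖mulV P (mulV A (x 0 + z) - b)‖)
    (kstar : ℕ) (hkstar : 0 < kstar)
    (hne : mulV P (mulV A (xG (kstar - 1)) - b) ≠ 0)
    (hdec : ∀ k, 0 < k → k < kstar →
      ‖mulV P (mulV A (xG k) - b)‖ < ‖mulV P (mulV A (xG (k - 1)) - b)‖) :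
    ∀ k ≤ kstar, x k = xG k := by
  classical
  set M : Matrix (Fin n) (Fin n) ℝ := P * A with hM
  set T : EuclideanSpace ℝ (Fin n) →ₗ[ℝ] EuclideanSpace ℝ (Fin n) :=
    Matrix.toEuclideanLin M with hT
  set c : EuclideanSpace ℝ (Fin n) := mulV P b with hc
  have hTapp : ∀ y, T y = mulV M y := fun y => rfl
  have hMdet : IsUnit M.det := by
    rw [hM, Matrix.det_mul]
    exact hP.mul hA
  have hTinj : Function.Injective T := by
    intro v w h
    have h2 : mulV M⁻¹ (mulV M v) = mulV M⁻¹ (mulV M w) := by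
      rw [show mulV M v = T v from rfl, show mulV M w = T w from rfl, h]
    rwa [mulV_mulV, mulV_mulV, Matrix.nonsing_inv_mul M hMdet, mulV_one, mulV_one] at h2
  have hres : ∀ y, mulV P (mulV A y - b) = T y - c := by
    intro y
    rw [mulV_sub, mulV_mulV, ← hM, ← hc, ← hTapp]
  have hq' : ∀ y, q y = y - (T y - c) := by
    intro y
    rw [hq y, mulV_sub, mulV_mulV, ← hM, ← hc, ← hTapp]
    abel
  obtain ⟨al, be, hsymT⟩ : ∃ al be : ℝ, ∀ v w : EuclideanSpace ℝ (Fin n),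
      ⟪T v, w⟫ = al * ⟪v, w⟫ + be * ⟪v, T w⟫ := by
    rcases hsym with h | ⟨τ, S, hS, hMs⟩
    · refine ⟨0, 1, fun v w => ?_⟩
      rw [hTapp, mulV_transpose_inner, h, ← hTapp]
      ring
    · refine ⟨2*τ, -1, fun v w => ?_⟩
      have hMt : Mᵀ = (2*τ) • (1 : Matrix (Fin n) (Fin n) ℝ) - M := by
        rw [hMs, Matrix.transpose_add, Matrix.transpose_smul, Matrix.transpose_one, hS]
        module
      rw [hTapp, mulV_transpose_inner, hMt, mulV_msub, mulV_msmul, mulV_one,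
        inner_sub_right, real_inner_smul_right, ← hTapp]
      ring
  have hKry : ∀ j, Krylov M r0 j = kry T r0 j := by
    intro j
    have hfun : (fun i : Fin j => mulV (M ^ (i:ℕ)) r0) = fun i : Fin j => (T ^ (i:ℕ)) r0 :=
      funext fun i => by rw [mulV_pow, ← hT]
    unfold Krylov kry
    rw [hfun]
  have hu : r0 = T (x 0) - c := by rw [hr0, hres]
  have hstep' : ∀ k, x (k+1) = (x k - (T (x k) - c)) +
      ∑ i ∈ Finset.range (min k m + 1), β k i • ((x k - (T (x k) - c)) - x (k - i)) := by
    intro k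
    have h := hstep k
    rw [hq'] at h
    exact h
  have hopt' : ∀ k, ∀ cf : ℕ → ℝ,
      ‖T (x (k+1)) - c‖ ≤
      ‖T ((x k - (T (x k) - c)) + ∑ i ∈ Finset.range (min k m + 1),
          cf i • ((x k - (T (x k) - c)) - x (k - i))) - c‖ := by
    intro k cf
    have h := hopt k cf
    rw [hq', hres, hres] at h
    exact h
  have hGmem' : ∀ k, ∃ z ∈ kry T r0 k, xG k = x 0 + z := by
    intro k
    rw [← hKry]
    exact hGmem k
  have hGopt' : ∀ k, ∀ z ∈ kry T r0 k, ‖T (xG k) - c‖ ≤ ‖T (x 0 + z) - c‖ := by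
    intro k z hz
    rw [← hKry] at hz
    have h := hGopt k z hz
    rwa [hres, hres] at h
  have hne' : T (xG (kstar - 1)) - c ≠ 0 := by
    rw [← hres]
    exact hne
  have hdec' : ∀ k, 0 < k → k < kstar → ‖T (xG k) - c‖ < ‖T (xG (k-1)) - c‖ := by
    intro k h1 h2
    have h := hdec k h1 h2
    rwa [hres, hres] at h
  exact gmres_general T r0 hTinj al be hsymT c m hm x xG β hu hstep' hopt' hG0
    hGmem' hGopt' kstar hkstar hne' hdec'
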